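/- Let H = ([n_H], E_H) be a graph with m_H = |E_H| and G the roommates instance constructed from H as described. For every integer 1 ≤ k ≤ n_H, H admits a vertex cover of size k if and only if G admits a popular matching of size at least m_H + 2n_H − k. -/
import Mathlib


open scoped Classical

/-- A roommates instance: a (finite) graph `(V, adj)` together with a raw preference
relation: `pref u v w` means vertex `u` strictly prefers its neighbor `v` to its
neighbor `w`. -/
structure RoommatesInstance (V : Type) where
  adj : V → V → Prop
  adj_symm : ∀ u v, adj u v → adj v u
  adj_irrefl : ∀ u, ¬ adj u u
  pref : V → V → V → Prop

namespace RoommatesInstance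

variable {V : Type}

/-- The preference relation of each vertex is a strict linear order on its neighbors. -/
def StrictPrefs (G : RoommatesInstance V) : Prop :=
  (∀ u v w, G.pref u v w → G.adj u v ∧ G.adj u w) ∧
  (∀ u v w x, G.pref u v w → G.pref u w x → G.pref u v x) ∧
  (∀ u v w, G.pref u v w → ¬ G.pref u w v) ∧
  (∀ u v w, G.adj u v → G.adj u w → v ≠ w → G.pref u v w ∨ G.pref u w v)

/-- A matching, encoded by the partner function of the corresponding perfect matching
`M̃` of `G̃` (the graph `G` with a self-loop added at every vertex): `m u = u` means
that `u` is unmatched in `M`, i.e. matched to itself along its self-loop in `M̃`. -/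
structure Matching (G : RoommatesInstance V) where
  m : V → V
  invol : ∀ u, m (m u) = u
  adj_of_ne : ∀ u, m u ≠ u → G.adj u (m u)

variable (G : RoommatesInstance V)

/-- `u` considers `v` strictly better than `w`, where each of `v`, `w` is either a
neighbor of `u` or `u` itself (`u` itself stands for being unmatched, which every
vertex ranks below all of its neighbors). -/
def Better (u v w : V) : Prop :=
  (w = u ∧ v ≠ u) ∨ (v ≠ u ∧ w ≠ u ∧ G.pref u v w)

/-- vertex `u` prefers matching `M` to matching `M'` -/
def Prefers (M M' : G.Matching) (u : V) : Prop :=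
  G.Better u (M.m u) (M'.m u)

/-- `φ(M,M')`: the number of vertices preferring `M` to `M'` -/
noncomputable def phi [Fintype V] (M M' : G.Matching) : ℕ :=
  (Finset.univ.filter fun u => G.Prefers M M' u).card

/-- `Δ(M,M') = φ(M,M') - φ(M',M)` -/
noncomputable def delta [Fintype V] (M M' : G.Matching) : ℤ :=
  (G.phi M M' : ℤ) - (G.phi M' M : ℤ)

/-- a matching `M` is popular if it never loses a head-to-head election -/
def Popular [Fintype V] (M : G.Matching) : Prop :=
  ∀ M' : G.Matching, 0 ≤ G.delta M M'

/-- `(u,v)` is a blocking edge to `M`: both endpoints prefer each other to their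
assignments in `M̃`. -/
def Blocks (M : G.Matching) (u v : V) : Prop :=
  G.adj u v ∧ G.Better u v (M.m u) ∧ G.Better v u (M.m v)

/-- `(u,v)` is a negative edge to `M`: both endpoints prefer their assignments in `M̃`
to each other. -/
def Negative (M : G.Matching) (u v : V) : Prop :=
  G.adj u v ∧ G.Better u (M.m u) v ∧ G.Better v (M.m v) u

/-- `cost_M` on the edges of `G̃`: `cost_M(u,v) = 2` for a blocking edge, `-2` for a
negative edge, `0` otherwise; `cost_M(u,u) = 0` if `u` is unmatched in `M` and `-1`
otherwise. -/
noncomputable def cost (M : G.Matching) (u v : V) : ℤ :=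
  if u = v then (if M.m u = u then 0 else -1)
  else if G.Blocks M u v then 2
  else if G.Negative M u v then -2
  else 0

/-- a stable matching: no blocking edge -/
def Stable (M : G.Matching) : Prop := ∀ u v, ¬ G.Blocks M u v

/-- the number of edges of a matching -/
noncomputable def msize [Fintype V] (M : G.Matching) : ℕ :=
  (Finset.univ.filter fun u => M.m u ≠ u).card / 2

theorem cost_comm (M : G.Matching) (u v : V) : G.cost M u v = G.cost M v u := by
  unfold cost
  rcases eq_or_ne u v with rfl | huv
  · rfl
  · rw [if_neg huv, if_neg (Ne.symm huv)]
    have hb : G.Blocks M u v ↔ G.Blocks M v u :=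
      ⟨fun ⟨h1, h2, h3⟩ => ⟨G.adj_symm _ _ h1, h3, h2⟩,
       fun ⟨h1, h2, h3⟩ => ⟨G.adj_symm _ _ h1, h3, h2⟩⟩
    have hn : G.Negative M u v ↔ G.Negative M v u :=
      ⟨fun ⟨h1, h2, h3⟩ => ⟨G.adj_symm _ _ h1, h3, h2⟩,
       fun ⟨h1, h2, h3⟩ => ⟨G.adj_symm _ _ h1, h3, h2⟩⟩
    simp only [hb, hn]

end RoommatesInstance

/-! ## The roommates instance `G` constructed from a vertex-cover instance `H` -/

/-- The vertex set of the roommates instance `G` built from a graph `H` on `Fin n`: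
vertices `a_i, b_i, c_i, d_i` for every vertex `i` of `H`, and a vertex
`u^e_i = U i j` for every edge `e = (i,j)` of `H` (so `U i j` is the vertex of the
edge `{i,j}` associated with endpoint `i`; for non-adjacent pairs `(i,j)` the vertex
`U i j` is isolated, hence irrelevant). -/
inductive GV (n : ℕ) where
  | A (i : Fin n) | B (i : Fin n) | C (i : Fin n) | D (i : Fin n) | U (i j : Fin n)
  deriving DecidableEq, Fintype

variable {n : ℕ}

/-- The edges of `G` (listed in one direction each):
`a_i` is adjacent to `b_i, c_i, d_i`; `b_i` is adjacent to `c_i` and to `u^e_i` for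
every edge `e` of `H` incident to `i`; and `u^e_i` is adjacent to `u^e_j` for every
edge `e = (i,j)` of `H`. -/
def grel (H : SimpleGraph (Fin n)) : GV n → GV n → Prop := fun x y =>
  (∃ i, x = GV.A i ∧ (y = GV.B i ∨ y = GV.C i ∨ y = GV.D i)) ∨
  (∃ i, x = GV.B i ∧ y = GV.C i) ∨
  (∃ i j, x = GV.B i ∧ y = GV.U i j ∧ H.Adj i j) ∨
  (∃ i j, x = GV.U i j ∧ y = GV.U j i ∧ H.Adj i j)

/-- Ranks encoding the preference lists of `G` (lower rank = more preferred):
`a_i : b_i ≻ c_i ≻ d_i`;  `b_i : a_i ≻ u^{e_1}_i ≻ ⋯ ≻ u^{e_k}_i ≻ c_i`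
(the `u^e_i`'s ordered by the index of the other endpoint of `e`);
`c_i : a_i ≻ b_i`;  `d_i : a_i`;  `u^e_i : u^e_j ≻ b_i`. -/
def grank : GV n → GV n → ℕ := fun x y =>
  match x, y with
  | GV.A _, GV.B _ => 0
  | GV.A _, GV.C _ => 1
  | GV.A _, GV.D _ => 2
  | GV.B _, GV.A _ => 0
  | GV.B _, GV.U _ k => 1 + k.val
  | GV.B _, GV.C _ => 1 + n
  | GV.C _, GV.A _ => 0
  | GV.C _, GV.B _ => 1
  | GV.D _, GV.A _ => 0
  | GV.U _ _, GV.U _ _ => 0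
  | GV.U _ _, GV.B _ => 1
  | _, _ => 0

/-- The roommates instance `G` constructed from the vertex cover instance `H`. -/
def GofH (H : SimpleGraph (Fin n)) : RoommatesInstance (GV n) where
  adj x y := x ≠ y ∧ (grel H x y ∨ grel H y x)
  adj_symm := fun _ _ h => ⟨h.1.symm, h.2.symm⟩
  adj_irrefl := fun _ h => h.1 rfl
  pref u v w :=
    (u ≠ v ∧ (grel H u v ∨ grel H v u)) ∧ (u ≠ w ∧ (grel H u w ∨ grel H w u)) ∧
      grank u v < grank u w

section VCPop

open RoommatesInstance GV

variable {n : ℕ} (H : SimpleGraph (Fin n))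

lemma adjA {i : Fin n} {x : GV n} :
    (GofH H).adj (A i) x ↔ x = B i ∨ x = C i ∨ x = D i := by
  cases x <;> simp [GofH, grel] <;> aesop

lemma adjB {i : Fin n} {x : GV n} :
    (GofH H).adj (B i) x ↔ x = A i ∨ x = C i ∨ ∃ j, x = U i j ∧ H.Adj i j := by
  cases x <;> simp [GofH, grel] <;> aesop

lemma adjC {i : Fin n} {x : GV n} :
    (GofH H).adj (C i) x ↔ x = A i ∨ x = B i := by
  cases x <;> simp [GofH, grel] <;> aesop

lemma adjD {i : Fin n} {x : GV n} :
    (GofH H).adj (D i) x ↔ x = A i := by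
  cases x <;> simp [GofH, grel] <;> aesop

lemma adjU {i j : Fin n} {x : GV n} :
    (GofH H).adj (U i j) x ↔ H.Adj i j ∧ (x = U j i ∨ x = B i) := by
  have hne : H.Adj i j → i ≠ j := fun h => h.ne
  cases x <;> simp [GofH, grel] <;> aesop (add safe forward [SimpleGraph.Adj.symm, SimpleGraph.Adj.ne])

lemma pref_iff {u v w : GV n} :
    (GofH H).pref u v w ↔ (GofH H).adj u v ∧ (GofH H).adj u w ∧ grank u v < grank u w :=
  Iff.rfl

lemma better_asymm {u v w : GV n} (h : (GofH H).Better u v w) : ¬ (GofH H).Better u w v := by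
  rcases h with ⟨rfl, hv⟩ | ⟨hv, hw, -, -, h3⟩
  · rintro (⟨rfl, h⟩ | ⟨h, -, -⟩) <;> exact h rfl
  · rintro (⟨rfl, h⟩ | ⟨-, -, -, -, h3'⟩)
    · exact hv rfl
    · omega

lemma better_irrefl {u v : GV n} : ¬ (GofH H).Better u v v := by
  rintro (⟨rfl, hv⟩ | ⟨-, -, -, -, h3⟩)
  · exact hv rfl
  · omega

/-- the vote of `u` comparing `v` against its partner in `M` -/
noncomputable def vt (M : (GofH H).Matching) (u v : GV n) : ℤ :=
  if (GofH H).Better u v (M.m u) then 1 else if (GofH H).Better u (M.m u) v then -1 else 0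

lemma vt_eq_zero {M : (GofH H).Matching} {u v : GV n} (h : v = M.m u) :
    vt H M u v = 0 := by
  subst h; simp [vt, better_irrefl]

lemma delta_eq (M M' : (GofH H).Matching) :
    (GofH H).delta M M' = -∑ u, vt H M u (M'.m u) := by
  have key : ∀ u : GV n, vt H M u (M'.m u) =
      (if (GofH H).Better u (M'.m u) (M.m u) then (1:ℤ) else 0) -
      (if (GofH H).Better u (M.m u) (M'.m u) then (1:ℤ) else 0) := by
    intro u
    unfold vt
    by_cases h1 : (GofH H).Better u (M'.m u) (M.m u)
    · simp [h1, better_asymm H h1]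
    · by_cases h2 : (GofH H).Better u (M.m u) (M'.m u) <;> simp [h1, h2]
  rw [Finset.sum_congr rfl (fun u _ => key u), Finset.sum_sub_distrib]
  simp only [Finset.sum_boole]
  unfold RoommatesInstance.delta RoommatesInstance.phi RoommatesInstance.Prefers
  push_cast
  ring

lemma popular_iff (M : (GofH H).Matching) :
    (GofH H).Popular M ↔ ∀ M' : (GofH H).Matching, (∑ u, vt H M u (M'.m u)) ≤ 0 := by
  unfold RoommatesInstance.Popular
  constructor <;> intro h M' <;> have := h M' <;> rw [delta_eq] at * <;> omega

def gvEquiv : GV n ≃ (Fin n ⊕ Fin n ⊕ Fin n ⊕ Fin n ⊕ Fin n × Fin n) where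
  toFun x := match x with
    | A i => .inl i
    | B i => .inr (.inl i)
    | C i => .inr (.inr (.inl i))
    | D i => .inr (.inr (.inr (.inl i)))
    | U i j => .inr (.inr (.inr (.inr (i, j))))
  invFun s := match s with
    | .inl i => A i
    | .inr (.inl i) => B i
    | .inr (.inr (.inl i)) => C i
    | .inr (.inr (.inr (.inl i))) => D i
    | .inr (.inr (.inr (.inr (i, j)))) => U i j
  left_inv x := by cases x <;> rfl
  right_inv s := by rcases s with i | i | i | i | ⟨i, j⟩ <;> rfl

lemma sum_gv {α : Type*} [AddCommMonoid α] (f : GV n → α) :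
    ∑ x, f x = (∑ i, f (A i)) + (∑ i, f (B i)) + (∑ i, f (C i)) + (∑ i, f (D i)) +
      (∑ p : Fin n × Fin n, f (U p.1 p.2)) := by
  rw [← Equiv.sum_comp (gvEquiv (n := n)).symm f]
  simp [Fintype.sum_sum_type, gvEquiv, add_assoc]

lemma bet_rank {u v w : GV n} (h1 : (GofH H).adj u v) (h2 : (GofH H).adj u w)
    (h3 : grank u v < grank u w) : (GofH H).Better u v w :=
  Or.inr ⟨Ne.symm h1.1, Ne.symm h2.1, h1, h2, h3⟩

lemma bet_un {u v : GV n} (h : (GofH H).adj u v) : (GofH H).Better u v u :=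
  Or.inl ⟨rfl, Ne.symm h.1⟩

lemma vt_eq_one {M : (GofH H).Matching} {u v : GV n}
    (h : (GofH H).Better u v (M.m u)) : vt H M u v = 1 := if_pos h

lemma vt_eq_neg {M : (GofH H).Matching} {u v : GV n}
    (h : (GofH H).Better u (M.m u) v) : vt H M u v = -1 := by
  unfold vt
  rw [if_neg (fun h' => better_asymm H h' h), if_pos h]

lemma vt_le_one {M : (GofH H).Matching} {u v : GV n} : vt H M u v ≤ 1 := by
  unfold vt; split <;> [omega; (split <;> omega)]

-- basic adjacency facts
lemma hadjAB {i : Fin n} : (GofH H).adj (A i) (B i) := (adjA H).mpr (Or.inl rfl)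
lemma hadjAC {i : Fin n} : (GofH H).adj (A i) (C i) := (adjA H).mpr (Or.inr (Or.inl rfl))
lemma hadjAD {i : Fin n} : (GofH H).adj (A i) (D i) := (adjA H).mpr (Or.inr (Or.inr rfl))
lemma hadjBA {i : Fin n} : (GofH H).adj (B i) (A i) := (adjB H).mpr (Or.inl rfl)
lemma hadjBC {i : Fin n} : (GofH H).adj (B i) (C i) := (adjB H).mpr (Or.inr (Or.inl rfl))
lemma hadjBU {i j : Fin n} (h : H.Adj i j) : (GofH H).adj (B i) (U i j) :=
  (adjB H).mpr (Or.inr (Or.inr ⟨j, rfl, h⟩))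
lemma hadjCA {i : Fin n} : (GofH H).adj (C i) (A i) := (adjC H).mpr (Or.inl rfl)
lemma hadjCB {i : Fin n} : (GofH H).adj (C i) (B i) := (adjC H).mpr (Or.inr rfl)
lemma hadjDA {i : Fin n} : (GofH H).adj (D i) (A i) := (adjD H).mpr rfl
lemma hadjUU {i j : Fin n} (h : H.Adj i j) : (GofH H).adj (U i j) (U j i) :=
  (adjU H).mpr ⟨h, Or.inl rfl⟩
lemma hadjUB {i j : Fin n} (h : H.Adj i j) : (GofH H).adj (U i j) (B i) :=
  (adjU H).mpr ⟨h, Or.inr rfl⟩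

-- partner options
lemma partnerA (M' : (GofH H).Matching) (i : Fin n) :
    M'.m (A i) = A i ∨ M'.m (A i) = B i ∨ M'.m (A i) = C i ∨ M'.m (A i) = D i := by
  by_cases h : M'.m (A i) = A i
  · exact Or.inl h
  · exact Or.inr ((adjA H).mp (M'.adj_of_ne _ h))

lemma partnerB (M' : (GofH H).Matching) (i : Fin n) :
    M'.m (B i) = B i ∨ M'.m (B i) = A i ∨ M'.m (B i) = C i ∨
      ∃ j, M'.m (B i) = U i j ∧ H.Adj i j := by
  by_cases h : M'.m (B i) = B i
  · exact Or.inl h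
  · exact Or.inr ((adjB H).mp (M'.adj_of_ne _ h))

lemma partnerC (M' : (GofH H).Matching) (i : Fin n) :
    M'.m (C i) = C i ∨ M'.m (C i) = A i ∨ M'.m (C i) = B i := by
  by_cases h : M'.m (C i) = C i
  · exact Or.inl h
  · exact Or.inr ((adjC H).mp (M'.adj_of_ne _ h))

lemma partnerD (M' : (GofH H).Matching) (i : Fin n) :
    M'.m (D i) = D i ∨ M'.m (D i) = A i := by
  by_cases h : M'.m (D i) = D i
  · exact Or.inl h
  · exact Or.inr ((adjD H).mp (M'.adj_of_ne _ h))

lemma partnerU (M' : (GofH H).Matching) {i j : Fin n} (h : H.Adj i j) :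
    M'.m (U i j) = U i j ∨ M'.m (U i j) = U j i ∨ M'.m (U i j) = B i := by
  by_cases h' : M'.m (U i j) = U i j
  · exact Or.inl h'
  · exact Or.inr ((adjU H).mp (M'.adj_of_ne _ h')).2

lemma partnerU' (M' : (GofH H).Matching) {i j : Fin n} (h : ¬ H.Adj i j) :
    M'.m (U i j) = U i j := by
  by_cases h' : M'.m (U i j) = U i j
  · exact h'
  · exact absurd ((adjU H).mp (M'.adj_of_ne _ h')).1 h

/-- the matching associated to a vertex cover `K` -/
def mfun (H : SimpleGraph (Fin n)) [DecidableRel H.Adj] (K : Finset (Fin n)) :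
    GV n → GV n
  | .A i => if i ∈ K then .B i else .D i
  | .B i => if i ∈ K then .A i else .C i
  | .C i => if i ∈ K then .C i else .B i
  | .D i => if i ∈ K then .D i else .A i
  | .U i j => if H.Adj i j then .U j i else .U i j

variable [DecidableRel H.Adj] (K : Finset (Fin n))

def MC : (GofH H).Matching where
  m := mfun H K
  invol u := by
    cases u with
    | U i j =>
      by_cases h : H.Adj i j
      · simp [mfun, h, h.symm]
      · simp [mfun, h]
    | _ => rename_i i; by_cases hi : i ∈ K <;> simp [mfun, hi]
  adj_of_ne u hu := by
    cases u with
    | U i j =>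
      by_cases h : H.Adj i j
      · simpa [mfun, h] using hadjUU H h
      · simp [mfun, h] at hu
    | A i => by_cases hi : i ∈ K <;>
        simpa [mfun, hi] using (by first | exact hadjAB H | exact hadjAD H)
    | B i => by_cases hi : i ∈ K <;>
        simpa [mfun, hi] using (by first | exact hadjBA H | exact hadjBC H)
    | C i => by_cases hi : i ∈ K <;> simp [mfun, hi] at hu ⊢; exact hadjCB H
    | D i => by_cases hi : i ∈ K <;> simp [mfun, hi] at hu ⊢; exact hadjDA H

lemma mcA {i : Fin n} (hi : i ∈ K) : (MC H K).m (A i) = B i := by simp [MC, mfun, hi]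
lemma mcA' {i : Fin n} (hi : i ∉ K) : (MC H K).m (A i) = D i := by simp [MC, mfun, hi]
lemma mcB {i : Fin n} (hi : i ∈ K) : (MC H K).m (B i) = A i := by simp [MC, mfun, hi]
lemma mcB' {i : Fin n} (hi : i ∉ K) : (MC H K).m (B i) = C i := by simp [MC, mfun, hi]
lemma mcC {i : Fin n} (hi : i ∈ K) : (MC H K).m (C i) = C i := by simp [MC, mfun, hi]
lemma mcC' {i : Fin n} (hi : i ∉ K) : (MC H K).m (C i) = B i := by simp [MC, mfun, hi]
lemma mcD {i : Fin n} (hi : i ∈ K) : (MC H K).m (D i) = D i := by simp [MC, mfun, hi]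
lemma mcD' {i : Fin n} (hi : i ∉ K) : (MC H K).m (D i) = A i := by simp [MC, mfun, hi]
lemma mcU {i j : Fin n} (h : H.Adj i j) : (MC H K).m (U i j) = U j i := by simp [MC, mfun, h]
lemma mcU' {i j : Fin n} (h : ¬ H.Adj i j) : (MC H K).m (U i j) = U i j := by
  simp [MC, mfun, h]

-- vote table for `MC H K`
variable {i j : Fin n}

lemma vAB (hi : i ∈ K) : vt H (MC H K) (A i) (B i) = 0 := vt_eq_zero H (mcA H K hi).symm
lemma vAC (hi : i ∈ K) : vt H (MC H K) (A i) (C i) = -1 := by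
  apply vt_eq_neg; rw [mcA H K hi]
  exact bet_rank H (hadjAB H) (hadjAC H) (by simp [grank])
lemma vAD (hi : i ∈ K) : vt H (MC H K) (A i) (D i) = -1 := by
  apply vt_eq_neg; rw [mcA H K hi]
  exact bet_rank H (hadjAB H) (hadjAD H) (by simp [grank])
lemma vAs (hi : i ∈ K) : vt H (MC H K) (A i) (A i) = -1 := by
  apply vt_eq_neg; rw [mcA H K hi]; exact bet_un H (hadjAB H)
lemma vAB' (hi : i ∉ K) : vt H (MC H K) (A i) (B i) = 1 := by
  apply vt_eq_one; rw [mcA' H K hi]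
  exact bet_rank H (hadjAB H) (hadjAD H) (by simp [grank])
lemma vAC' (hi : i ∉ K) : vt H (MC H K) (A i) (C i) = 1 := by
  apply vt_eq_one; rw [mcA' H K hi]
  exact bet_rank H (hadjAC H) (hadjAD H) (by simp [grank])
lemma vAD' (hi : i ∉ K) : vt H (MC H K) (A i) (D i) = 0 := vt_eq_zero H (mcA' H K hi).symm
lemma vAs' (hi : i ∉ K) : vt H (MC H K) (A i) (A i) = -1 := by
  apply vt_eq_neg; rw [mcA' H K hi]; exact bet_un H (hadjAD H)
lemma vBA (hi : i ∈ K) : vt H (MC H K) (B i) (A i) = 0 := vt_eq_zero H (mcB H K hi).symm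
lemma vBU (hi : i ∈ K) (h : H.Adj i j) : vt H (MC H K) (B i) (U i j) = -1 := by
  apply vt_eq_neg; rw [mcB H K hi]
  exact bet_rank H (hadjBA H) (hadjBU H h) (by simp [grank])
lemma vBC (hi : i ∈ K) : vt H (MC H K) (B i) (C i) = -1 := by
  apply vt_eq_neg; rw [mcB H K hi]
  exact bet_rank H (hadjBA H) (hadjBC H) (by simp [grank])
lemma vBs (hi : i ∈ K) : vt H (MC H K) (B i) (B i) = -1 := by
  apply vt_eq_neg; rw [mcB H K hi]; exact bet_un H (hadjBA H)
lemma vBA' (hi : i ∉ K) : vt H (MC H K) (B i) (A i) = 1 := by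
  apply vt_eq_one; rw [mcB' H K hi]
  exact bet_rank H (hadjBA H) (hadjBC H) (by simp [grank])
lemma vBU' (hi : i ∉ K) (h : H.Adj i j) : vt H (MC H K) (B i) (U i j) = 1 := by
  apply vt_eq_one; rw [mcB' H K hi]
  exact bet_rank H (hadjBU H h) (hadjBC H) (by simp [grank])
lemma vBC' (hi : i ∉ K) : vt H (MC H K) (B i) (C i) = 0 := vt_eq_zero H (mcB' H K hi).symm
lemma vBs' (hi : i ∉ K) : vt H (MC H K) (B i) (B i) = -1 := by
  apply vt_eq_neg; rw [mcB' H K hi]; exact bet_un H (hadjBC H)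
lemma vCA (hi : i ∈ K) : vt H (MC H K) (C i) (A i) = 1 := by
  apply vt_eq_one; rw [mcC H K hi]; exact bet_un H (hadjCA H)
lemma vCB (hi : i ∈ K) : vt H (MC H K) (C i) (B i) = 1 := by
  apply vt_eq_one; rw [mcC H K hi]; exact bet_un H (hadjCB H)
lemma vCs (hi : i ∈ K) : vt H (MC H K) (C i) (C i) = 0 := vt_eq_zero H (mcC H K hi).symm
lemma vCA' (hi : i ∉ K) : vt H (MC H K) (C i) (A i) = 1 := by
  apply vt_eq_one; rw [mcC' H K hi]
  exact bet_rank H (hadjCA H) (hadjCB H) (by simp [grank])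
lemma vCB' (hi : i ∉ K) : vt H (MC H K) (C i) (B i) = 0 := vt_eq_zero H (mcC' H K hi).symm
lemma vCs' (hi : i ∉ K) : vt H (MC H K) (C i) (C i) = -1 := by
  apply vt_eq_neg; rw [mcC' H K hi]; exact bet_un H (hadjCB H)
lemma vDA (hi : i ∈ K) : vt H (MC H K) (D i) (A i) = 1 := by
  apply vt_eq_one; rw [mcD H K hi]; exact bet_un H (hadjDA H)
lemma vDs (hi : i ∈ K) : vt H (MC H K) (D i) (D i) = 0 := vt_eq_zero H (mcD H K hi).symm
lemma vDA' (hi : i ∉ K) : vt H (MC H K) (D i) (A i) = 0 := vt_eq_zero H (mcD' H K hi).symm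
lemma vDs' (hi : i ∉ K) : vt H (MC H K) (D i) (D i) = -1 := by
  apply vt_eq_neg; rw [mcD' H K hi]; exact bet_un H (hadjDA H)
lemma vUU (h : H.Adj i j) : vt H (MC H K) (U i j) (U j i) = 0 :=
  vt_eq_zero H (mcU H K h).symm
lemma vUB (h : H.Adj i j) : vt H (MC H K) (U i j) (B i) = -1 := by
  apply vt_eq_neg; rw [mcU H K h]
  exact bet_rank H (hadjUU H h) (hadjUB H h) (by simp [grank])
lemma vUs (h : H.Adj i j) : vt H (MC H K) (U i j) (U i j) = -1 := by
  apply vt_eq_neg; rw [mcU H K h]; exact bet_un H (hadjUU H h)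
lemma vUs' (h : ¬ H.Adj i j) : vt H (MC H K) (U i j) (U i j) = 0 :=
  vt_eq_zero H (mcU' H K h).symm

lemma minv (M' : (GofH H).Matching) {u v : GV n} (h : M'.m u = v) : M'.m v = u := by
  rw [← h, M'.invol]

private lemma hsplit {t : ℤ} (P : Prop) [Decidable P] (h : t ≤ 0) :
    t ≤ if P then 2 else 0 := by split <;> omega

/-- bound for the `U`-vertices -/
lemma FU (M' : (GofH H).Matching) (p : Fin n × Fin n) :
    vt H (MC H K) (U p.1 p.2) (M'.m (U p.1 p.2)) ≤
      if H.Adj p.1 p.2 ∧ M'.m (U p.1 p.2) ≠ U p.2 p.1 then -1 else 0 := by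
  obtain ⟨i, j⟩ := p
  dsimp only
  by_cases h : H.Adj i j
  · rcases partnerU H M' h with h1 | h1 | h1
    · rw [h1, vUs H K h]
      rw [if_pos ⟨h, by simp only [ne_eq, GV.U.injEq, not_and]; exact fun hij _ => h.ne hij⟩]
    · rw [h1, vUU H K h, if_neg (by simp)]
    · rw [h1, vUB H K h, if_pos ⟨h, by simp⟩]
  · rw [partnerU' H M' h, vUs' H K h, if_neg (by tauto)]

/-- bound for the gadget of vertex `i` -/
lemma FT (M' : (GofH H).Matching) (i : Fin n) :
    vt H (MC H K) (A i) (M'.m (A i)) + vt H (MC H K) (B i) (M'.m (B i)) +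
      vt H (MC H K) (C i) (M'.m (C i)) + vt H (MC H K) (D i) (M'.m (D i)) ≤
      if i ∉ K ∧ ∃ j, H.Adj i j ∧ M'.m (B i) = U i j then 2 else 0 := by
  rcases partnerA H M' i with hA | hA | hA | hA
  · -- A unmatched
    have hD : M'.m (D i) = D i := by
      rcases partnerD H M' i with h | h
      · exact h
      · have := minv H M' h; rw [hA] at this; simp at this
    rcases partnerB H M' i with hB | hB | hB | ⟨j, hB, hadj⟩
    · have hC : M'.m (C i) = C i := by
        rcases partnerC H M' i with h | h | h
        · exact h
        · have := minv H M' h; rw [hA] at this; simp at this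
        · have := minv H M' h; rw [hB] at this; simp at this
      rw [hA, hB, hC, hD]
      by_cases hi : i ∈ K
      · rw [vAs H K hi, vBs H K hi, vCs H K hi, vDs H K hi]; apply hsplit; norm_num
      · rw [vAs' H K hi, vBs' H K hi, vCs' H K hi, vDs' H K hi]; apply hsplit; norm_num
    · have := minv H M' hB; rw [hA] at this; simp at this
    · have hC : M'.m (C i) = B i := minv H M' hB
      rw [hA, hB, hC, hD]
      by_cases hi : i ∈ K
      · rw [vAs H K hi, vBC H K hi, vCB H K hi, vDs H K hi]; apply hsplit; norm_num
      · rw [vAs' H K hi, vBC' H K hi, vCB' H K hi, vDs' H K hi]; apply hsplit; norm_num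
    · have hC : M'.m (C i) = C i := by
        rcases partnerC H M' i with h | h | h
        · exact h
        · have := minv H M' h; rw [hA] at this; simp at this
        · have := minv H M' h; rw [hB] at this; simp at this
      rw [hA, hB, hC, hD]
      by_cases hi : i ∈ K
      · rw [vAs H K hi, vBU H K hi hadj, vCs H K hi, vDs H K hi]; apply hsplit; norm_num
      · rw [vAs' H K hi, vBU' H K hi hadj, vCs' H K hi, vDs' H K hi]
        apply hsplit; norm_num
  · -- A – B
    have hB : M'.m (B i) = A i := minv H M' hA
    have hC : M'.m (C i) = C i := by
      rcases partnerC H M' i with h | h | h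
      · exact h
      · have := minv H M' h; rw [hA] at this; simp at this
      · have := minv H M' h; rw [hB] at this; simp at this
    have hD : M'.m (D i) = D i := by
      rcases partnerD H M' i with h | h
      · exact h
      · have := minv H M' h; rw [hA] at this; simp at this
    rw [hA, hB, hC, hD]
    by_cases hi : i ∈ K
    · rw [vAB H K hi, vBA H K hi, vCs H K hi, vDs H K hi]; apply hsplit; norm_num
    · rw [vAB' H K hi, vBA' H K hi, vCs' H K hi, vDs' H K hi]; apply hsplit; norm_num
  · -- A – C
    have hC : M'.m (C i) = A i := minv H M' hA
    have hD : M'.m (D i) = D i := by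
      rcases partnerD H M' i with h | h
      · exact h
      · have := minv H M' h; rw [hA] at this; simp at this
    rcases partnerB H M' i with hB | hB | hB | ⟨j, hB, hadj⟩
    · rw [hA, hB, hC, hD]
      by_cases hi : i ∈ K
      · rw [vAC H K hi, vBs H K hi, vCA H K hi, vDs H K hi]; apply hsplit; norm_num
      · rw [vAC' H K hi, vBs' H K hi, vCA' H K hi, vDs' H K hi]; apply hsplit; norm_num
    · have := minv H M' hB; rw [hA] at this; simp at this
    · have := minv H M' hB; rw [hC] at this; simp at this
    · rw [hA, hB, hC, hD]
      by_cases hi : i ∈ K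
      · rw [vAC H K hi, vBU H K hi hadj, vCA H K hi, vDs H K hi]; apply hsplit; norm_num
      · rw [vAC' H K hi, vBU' H K hi hadj, vCA' H K hi, vDs' H K hi,
          if_pos ⟨hi, j, hadj, rfl⟩]
        norm_num
  · -- A – D
    have hD : M'.m (D i) = A i := minv H M' hA
    rcases partnerB H M' i with hB | hB | hB | ⟨j, hB, hadj⟩
    · have hC : M'.m (C i) = C i := by
        rcases partnerC H M' i with h | h | h
        · exact h
        · have := minv H M' h; rw [hA] at this; simp at this
        · have := minv H M' h; rw [hB] at this; simp at this
      rw [hA, hB, hC, hD]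
      by_cases hi : i ∈ K
      · rw [vAD H K hi, vBs H K hi, vCs H K hi, vDA H K hi]; apply hsplit; norm_num
      · rw [vAD' H K hi, vBs' H K hi, vCs' H K hi, vDA' H K hi]; apply hsplit; norm_num
    · have := minv H M' hB; rw [hA] at this; simp at this
    · have hC : M'.m (C i) = B i := minv H M' hB
      rw [hA, hB, hC, hD]
      by_cases hi : i ∈ K
      · rw [vAD H K hi, vBC H K hi, vCB H K hi, vDA H K hi]; apply hsplit; norm_num
      · rw [vAD' H K hi, vBC' H K hi, vCB' H K hi, vDA' H K hi]; apply hsplit; norm_num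
    · have hC : M'.m (C i) = C i := by
        rcases partnerC H M' i with h | h | h
        · exact h
        · have := minv H M' h; rw [hA] at this; simp at this
        · have := minv H M' h; rw [hB] at this; simp at this
      rw [hA, hB, hC, hD]
      by_cases hi : i ∈ K
      · rw [vAD H K hi, vBU H K hi hadj, vCs H K hi, vDA H K hi]; apply hsplit; norm_num
      · rw [vAD' H K hi, vBU' H K hi hadj, vCs' H K hi, vDA' H K hi]
        apply hsplit; norm_num

theorem MC_popular (hK : ∀ i j, H.Adj i j → i ∈ K ∨ j ∈ K) :
    (GofH H).Popular (MC H K) := by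
  rw [popular_iff]
  intro M'
  rw [sum_gv]
  set S : Finset (Fin n) :=
    Finset.univ.filter (fun i => i ∉ K ∧ ∃ j, H.Adj i j ∧ M'.m (B i) = U i j) with hS
  set L : Finset (Fin n × Fin n) :=
    Finset.univ.filter
      (fun p => H.Adj p.1 p.2 ∧ M'.m (U p.1 p.2) ≠ U p.2 p.1) with hL
  -- gadget part
  have hTsum : (∑ i, vt H (MC H K) (A i) (M'.m (A i))) +
      (∑ i, vt H (MC H K) (B i) (M'.m (B i))) +
      (∑ i, vt H (MC H K) (C i) (M'.m (C i))) +
      (∑ i, vt H (MC H K) (D i) (M'.m (D i))) ≤ 2 * S.card := by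
    rw [← Finset.sum_add_distrib, ← Finset.sum_add_distrib, ← Finset.sum_add_distrib]
    calc _ ≤ ∑ i : Fin n,
        (if i ∉ K ∧ ∃ j, H.Adj i j ∧ M'.m (B i) = U i j then (2:ℤ) else 0) :=
          Finset.sum_le_sum (fun i _ => FT H K M' i)
      _ = ∑ i ∈ S, (2:ℤ) := (Finset.sum_filter _ _).symm
      _ = 2 * S.card := by rw [Finset.sum_const]; push_cast; ring
  -- U part
  have hUsum : (∑ p : Fin n × Fin n, vt H (MC H K) (U p.1 p.2) (M'.m (U p.1 p.2))) ≤
      - L.card := by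
    calc _ ≤ ∑ p : Fin n × Fin n,
        (if H.Adj p.1 p.2 ∧ M'.m (U p.1 p.2) ≠ U p.2 p.1 then (-1:ℤ) else 0) :=
          Finset.sum_le_sum (fun p _ => FU H K M' p)
      _ = ∑ p ∈ L, (-1:ℤ) := (Finset.sum_filter _ _).symm
      _ = - L.card := by rw [Finset.sum_const]; push_cast; ring
  -- the injection: 2 |S| ≤ |L|
  have hcard : 2 * S.card ≤ L.card := by
    classical
    set jf : Fin n → Fin n := fun i =>
      if h : ∃ j, H.Adj i j ∧ M'.m (B i) = U i j then h.choose else i with hjf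
    have hspec : ∀ i ∈ S, H.Adj i (jf i) ∧ M'.m (B i) = U i (jf i) := by
      intro i hi
      rw [hS, Finset.mem_filter] at hi
      obtain ⟨-, -, hex⟩ := hi
      rw [hjf]; simp only [dif_pos hex]
      exact hex.choose_spec
    have hnotK : ∀ i ∈ S, i ∉ K := by
      intro i hi; rw [hS, Finset.mem_filter] at hi; exact hi.2.1
    have hjfK : ∀ i ∈ S, jf i ∈ K := by
      intro i hi
      rcases hK i (jf i) (hspec i hi).1 with h | h
      · exact absurd h (hnotK i hi)
      · exact h
    have hsub1 : S.image (fun i => (i, jf i)) ⊆ L := by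
      intro p hp
      rw [Finset.mem_image] at hp
      obtain ⟨i, hi, rfl⟩ := hp
      rw [hL, Finset.mem_filter]
      refine ⟨Finset.mem_univ _, (hspec i hi).1, ?_⟩
      rw [minv H M' (hspec i hi).2]
      simp
    have hsub2 : S.image (fun i => (jf i, i)) ⊆ L := by
      intro p hp
      rw [Finset.mem_image] at hp
      obtain ⟨i, hi, rfl⟩ := hp
      rw [hL, Finset.mem_filter]
      refine ⟨Finset.mem_univ _, ((hspec i hi).1).symm, ?_⟩
      intro heq
      have := minv H M' heq
      rw [minv H M' (hspec i hi).2] at this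
      simp at this
    have hdisj : Disjoint (S.image (fun i => (i, jf i))) (S.image (fun i => (jf i, i))) := by
      rw [Finset.disjoint_left]
      intro p hp1 hp2
      rw [Finset.mem_image] at hp1 hp2
      obtain ⟨i, hi, rfl⟩ := hp1
      obtain ⟨i', hi', heq⟩ := hp2
      have h1 : jf i' = i := congrArg Prod.fst heq
      exact hnotK i hi (h1 ▸ hjfK i' hi')
    have hc1 : (S.image (fun i => (i, jf i))).card = S.card :=
      Finset.card_image_of_injOn (fun a _ b _ h => congrArg Prod.fst h)
    have hc2 : (S.image (fun i => (jf i, i))).card = S.card :=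
      Finset.card_image_of_injOn (fun a _ b _ h => congrArg Prod.snd h)
    calc 2 * S.card = (S.image (fun i => (i, jf i))).card +
          (S.image (fun i => (jf i, i))).card := by omega
      _ = ((S.image (fun i => (i, jf i))) ∪ (S.image (fun i => (jf i, i)))).card :=
          (Finset.card_union_of_disjoint hdisj).symm
      _ ≤ L.card := Finset.card_le_card (Finset.union_subset hsub1 hsub2)
  have : (2 * S.card : ℤ) ≤ (L.card : ℤ) := by exact_mod_cast hcard
  omega

lemma card_adj_pairs :
    (Finset.univ.filter (fun p : Fin n × Fin n => H.Adj p.1 p.2)).card =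
      2 * H.edgeFinset.card := by
  classical
  rw [← SimpleGraph.dart_card_eq_twice_card_edges]
  rw [← Fintype.card_subtype]
  exact (Fintype.card_congr
    ⟨fun d => ⟨d.toProd, d.adj⟩, fun p => ⟨p.1, p.2⟩, fun d => rfl, fun p => rfl⟩).symm

lemma MC_msize (hkn : K.card ≤ n) :
    (GofH H).msize (MC H K) = H.edgeFinset.card + 2 * n - K.card := by
  unfold RoommatesInstance.msize
  rw [Finset.filter_congr_decidable]
  have hcf : (Finset.univ.filter (fun u : GV n => (MC H K).m u ≠ u)).card =
      ∑ u : GV n, (if (MC H K).m u ≠ u then 1 else 0) := Finset.card_filter _ _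
  rw [hcf, sum_gv]
  have hA : (∑ i : Fin n, (if (MC H K).m (A i) ≠ A i then 1 else 0)) = n := by
    rw [Finset.sum_congr rfl (fun i _ => ?_), Finset.sum_const, smul_eq_mul, mul_one,
      Finset.card_univ, Fintype.card_fin]
    by_cases hi : i ∈ K <;> simp [mcA H K, mcA' H K, hi]
  have hB : (∑ i : Fin n, (if (MC H K).m (B i) ≠ B i then 1 else 0)) = n := by
    rw [Finset.sum_congr rfl (fun i _ => ?_), Finset.sum_const, smul_eq_mul, mul_one,
      Finset.card_univ, Fintype.card_fin]
    by_cases hi : i ∈ K <;> simp [mcB H K, mcB' H K, hi]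
  have hKuniv : (Finset.univ.filter (fun i : Fin n => i ∈ K)) = K := by
    ext i; simp
  have hcompl : (Finset.univ.filter (fun i : Fin n => i ∉ K)).card = n - K.card := by
    rw [Finset.filter_not, Finset.card_sdiff_of_subset (Finset.filter_subset _ _), hKuniv,
      Finset.card_univ, Fintype.card_fin]
  have hCsum : (∑ i : Fin n, (if (MC H K).m (C i) ≠ C i then 1 else 0)) = n - K.card := by
    rw [← hcompl, Finset.card_filter]
    refine Finset.sum_congr rfl (fun i _ => ?_)
    by_cases hi : i ∈ K <;> simp [mcC H K, mcC' H K, hi]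
  have hDsum : (∑ i : Fin n, (if (MC H K).m (D i) ≠ D i then 1 else 0)) = n - K.card := by
    rw [← hcompl, Finset.card_filter]
    refine Finset.sum_congr rfl (fun i _ => ?_)
    by_cases hi : i ∈ K <;> simp [mcD H K, mcD' H K, hi]
  have hUsum : (∑ p : Fin n × Fin n, (if (MC H K).m (U p.1 p.2) ≠ U p.1 p.2 then 1 else 0))
      = 2 * H.edgeFinset.card := by
    rw [← card_adj_pairs H, Finset.card_filter]
    refine Finset.sum_congr rfl (fun p _ => ?_)
    by_cases hp : H.Adj p.1 p.2
    · rw [mcU H K hp, if_pos hp,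
        if_pos (by simp only [ne_eq, GV.U.injEq, not_and]; exact fun h' _ => hp.ne' h')]
    · simp [mcU' H K hp, hp]
  rw [hA, hB, hCsum, hDsum, hUsum]
  omega

/-- modify a matching on a closed support set -/
def ovr (M : (GofH H).Matching) (f : GV n → GV n) (s : Finset (GV n))
    (h1 : ∀ u, u ∉ s → f u = M.m u)
    (h2 : ∀ u, u ∈ s → M.m u ∈ s)
    (h3 : ∀ u, u ∈ s → f (f u) = u ∧ (f u ≠ u → (GofH H).adj u (f u))) :
    (GofH H).Matching where
  m := f
  invol u := by
    by_cases hu : u ∈ s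
    · exact (h3 u hu).1
    · have hmu : M.m u ∉ s := fun hc => hu (by simpa [M.invol] using h2 _ hc)
      rw [h1 u hu, h1 _ hmu, M.invol]
  adj_of_ne u hne := by
    by_cases hu : u ∈ s
    · exact (h3 u hu).2 hne
    · rw [h1 u hu] at hne ⊢; exact M.adj_of_ne u hne

lemma not_popular_of_beat (M M' : (GofH H).Matching) (s : Finset (GV n))
    (hs : ∀ u, u ∉ s → M'.m u = M.m u) (hsum : 0 < ∑ u ∈ s, vt H M u (M'.m u)) :
    ¬ (GofH H).Popular M := by
  intro hpop
  have hp := (popular_iff H M).mp hpop M'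
  rw [← Finset.sum_subset (Finset.subset_univ s)
    (fun u _ hu => vt_eq_zero H (hs u hu))] at hp
  omega

lemma beat2 (M : (GofH H).Matching) {x y : GV n} (hadj : (GofH H).adj x y)
    (hx : M.m x = x) (hy : M.m y = y) : ¬ (GofH H).Popular M := by
  have hxy : x ≠ y := hadj.1
  set f : GV n → GV n := fun u => if u = x then y else if u = y then x else M.m u with hf
  have o1 : ∀ u, u ∉ ({x, y} : Finset (GV n)) → f u = M.m u := by
    intro u hu; simp only [Finset.mem_insert, Finset.mem_singleton, not_or] at hu
    simp [hf, hu.1, hu.2]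
  have o2 : ∀ u, u ∈ ({x, y} : Finset (GV n)) → M.m u ∈ ({x, y} : Finset (GV n)) := by
    intro u hu; simp only [Finset.mem_insert, Finset.mem_singleton] at hu ⊢
    rcases hu with rfl | rfl
    · exact Or.inl hx
    · exact Or.inr hy
  have ex : f x = y := by simp [hf, hxy]
  have ey : f y = x := by simp [hf, Ne.symm hxy]
  have o3 : ∀ u, u ∈ ({x, y} : Finset (GV n)) →
      f (f u) = u ∧ (f u ≠ u → (GofH H).adj u (f u)) := by
    intro u hu; simp only [Finset.mem_insert, Finset.mem_singleton] at hu
    rcases hu with rfl | rfl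
    · exact ⟨by rw [ex, ey], fun _ => by rw [ex]; exact hadj⟩
    · exact ⟨by rw [ey, ex], fun _ => by rw [ey]; exact (GofH H).adj_symm _ _ hadj⟩
  refine not_popular_of_beat H M (ovr H M f {x, y} o1 o2 o3) {x, y} o1 ?_
  rw [Finset.sum_insert (by simp [hxy]), Finset.sum_singleton]
  have e1 : (ovr H M f {x, y} o1 o2 o3).m x = y := ex
  have e2 : (ovr H M f {x, y} o1 o2 o3).m y = x := ey
  rw [e1, e2, vt_eq_one H (by rw [hx]; exact bet_un H hadj),
    vt_eq_one H (by rw [hy]; exact bet_un H ((GofH H).adj_symm _ _ hadj))]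
  norm_num

lemma beat3 (M : (GofH H).Matching) {x y z : GV n} (hadjxy : (GofH H).adj x y)
    (hadjzx : (GofH H).adj z x) (hMx : M.m x = z) (hMy : M.m y = y) (hzy : z ≠ y)
    (hvx : (GofH H).Better x y z) : ¬ (GofH H).Popular M := by
  have hxy : x ≠ y := hadjxy.1
  have hzx : z ≠ x := hadjzx.1
  have hMz : M.m z = x := minv H M hMx
  set f : GV n → GV n :=
    fun u => if u = x then y else if u = y then x else if u = z then z else M.m u with hf
  have o1 : ∀ u, u ∉ ({x, y, z} : Finset (GV n)) → f u = M.m u := by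
    intro u hu
    simp only [Finset.mem_insert, Finset.mem_singleton, not_or] at hu
    simp [hf, hu.1, hu.2.1, hu.2.2]
  have o2 : ∀ u, u ∈ ({x, y, z} : Finset (GV n)) →
      M.m u ∈ ({x, y, z} : Finset (GV n)) := by
    intro u hu; simp only [Finset.mem_insert, Finset.mem_singleton] at hu ⊢
    rcases hu with rfl | rfl | rfl
    · exact Or.inr (Or.inr hMx)
    · exact Or.inr (Or.inl hMy)
    · exact Or.inl hMz
  have ex : f x = y := by simp [hf, hxy]
  have ey : f y = x := by simp [hf, Ne.symm hxy]
  have ez : f z = z := by simp [hf, hzx, hzy]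
  have o3 : ∀ u, u ∈ ({x, y, z} : Finset (GV n)) →
      f (f u) = u ∧ (f u ≠ u → (GofH H).adj u (f u)) := by
    intro u hu; simp only [Finset.mem_insert, Finset.mem_singleton] at hu
    rcases hu with rfl | rfl | rfl
    · exact ⟨by rw [ex, ey], fun _ => by rw [ex]; exact hadjxy⟩
    · exact ⟨by rw [ey, ex], fun _ => by rw [ey]; exact (GofH H).adj_symm _ _ hadjxy⟩
    · exact ⟨by rw [ez, ez], fun h => absurd ez h⟩
  refine not_popular_of_beat H M (ovr H M f {x, y, z} o1 o2 o3) {x, y, z} o1 ?_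
  rw [Finset.sum_insert (by simp [hxy, hzx.symm]),
    Finset.sum_insert (by simp [hzy.symm]), Finset.sum_singleton]
  have e1 : (ovr H M f {x, y, z} o1 o2 o3).m x = y := ex
  have e2 : (ovr H M f {x, y, z} o1 o2 o3).m y = x := ey
  have e3 : (ovr H M f {x, y, z} o1 o2 o3).m z = z := ez
  rw [e1, e2, e3, vt_eq_one H (by rw [hMx]; exact hvx),
    vt_eq_one H (by rw [hMy]; exact bet_un H ((GofH H).adj_symm _ _ hadjxy)),
    vt_eq_neg H (by rw [hMz]; exact bet_un H hadjzx)]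
  norm_num

/-- structure of popular matchings on the gadgets -/
lemma S1 (M : (GofH H).Matching) (hpop : (GofH H).Popular M) (i : Fin n) :
    M.m (A i) = B i ∨ (M.m (A i) = D i ∧ M.m (B i) = C i) := by
  rcases partnerA H M i with hA | hA | hA | hA
  · -- A unmatched
    exfalso
    have hD : M.m (D i) = D i := by
      rcases partnerD H M i with h | h
      · exact h
      · have := minv H M h; rw [hA] at this; simp at this
    exact beat2 H M (hadjAD H) hA hD hpop
  · exact Or.inl hA
  · -- A–C
    exfalso
    have hC := minv H M hA
    rcases partnerB H M i with hB | hB | hB | ⟨j, hB, hadj⟩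
    · exact beat3 H M (hadjAB H) (hadjCA H) hA hB (by simp)
        (bet_rank H (hadjAB H) (hadjAC H) (by simp [grank])) hpop
    · have := minv H M hB; rw [hA] at this; simp at this
    · have := minv H M hB; rw [hC] at this; simp at this
    · -- B – U i j
      have hU := minv H M hB
      rcases partnerU H M hadj.symm with hU' | hU' | hU'
      · exact beat3 H M (hadjUU H hadj) (hadjBU H hadj) hU hU' (by simp)
          (bet_rank H (hadjUU H hadj) (hadjUB H hadj) (by simp [grank])) hpop
      · have := minv H M hU'; rw [hU] at this; simp at this
      · -- 6-vertex swap
        have hBj := minv H M hU'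
        have hne := hadj.ne
        have hne' := hadj.ne'
        set f : GV n → GV n := fun u =>
          if u = A i then B i else if u = B i then A i else if u = C i then C i else
          if u = U i j then U j i else if u = U j i then U i j else
          if u = B j then B j else M.m u with hf
        have o1 : ∀ u, u ∉ ({A i, B i, C i, U i j, U j i, B j} : Finset (GV n)) → f u = M.m u := by
          intro u hu
          simp only [Finset.mem_insert, Finset.mem_singleton, not_or] at hu
          obtain ⟨n1, n2, n3, n4, n5, n6⟩ := hu
          simp [hf, n1, n2, n3, n4, n5, n6]
        have o2 : ∀ u, u ∈ ({A i, B i, C i, U i j, U j i, B j} : Finset (GV n)) → M.m u ∈ ({A i, B i, C i, U i j, U j i, B j} : Finset (GV n)) := by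
          intro u hu
          simp only [Finset.mem_insert, Finset.mem_singleton] at hu
          rcases hu with rfl | rfl | rfl | rfl | rfl | rfl <;>
            simp [hA, hB, hC, hU, hU', hBj]
        have eA : f (A i) = B i := by simp [hf]
        have eB : f (B i) = A i := by simp [hf]
        have eC : f (C i) = C i := by simp [hf]
        have eU : f (U i j) = U j i := by simp [hf, hne]
        have eU' : f (U j i) = U i j := by simp [hf, hne, hne']
        have eBj : f (B j) = B j := by simp [hf, hne, hne']
        have o3 : ∀ u, u ∈ ({A i, B i, C i, U i j, U j i, B j} : Finset (GV n)) → f (f u) = u ∧ (f u ≠ u → (GofH H).adj u (f u)) := by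
          intro u hu
          simp only [Finset.mem_insert, Finset.mem_singleton] at hu
          rcases hu with rfl | rfl | rfl | rfl | rfl | rfl
          · exact ⟨by rw [eA, eB], fun _ => by rw [eA]; exact hadjAB H⟩
          · exact ⟨by rw [eB, eA], fun _ => by rw [eB]; exact hadjBA H⟩
          · exact ⟨by rw [eC, eC], fun h => absurd eC h⟩
          · exact ⟨by rw [eU, eU'], fun _ => by rw [eU]; exact hadjUU H hadj⟩
          · exact ⟨by rw [eU', eU], fun _ => by rw [eU']; exact hadjUU H hadj.symm⟩
          · exact ⟨by rw [eBj, eBj], fun h => absurd eBj h⟩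
        refine not_popular_of_beat H M
          (ovr H M f {A i, B i, C i, U i j, U j i, B j} o1 o2 o3)
          {A i, B i, C i, U i j, U j i, B j} o1 ?_ hpop
        rw [Finset.sum_insert (by simp [hne, hne']), Finset.sum_insert (by simp [hne, hne']),
          Finset.sum_insert (by simp [hne, hne']), Finset.sum_insert (by simp [hne, hne']),
          Finset.sum_insert (by simp [hne, hne']), Finset.sum_singleton]
        have m1 : (ovr H M f {A i, B i, C i, U i j, U j i, B j} o1 o2 o3).m (A i) = B i := eA
        have m2 : (ovr H M f {A i, B i, C i, U i j, U j i, B j} o1 o2 o3).m (B i) = A i := eB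
        have m3 : (ovr H M f {A i, B i, C i, U i j, U j i, B j} o1 o2 o3).m (C i) = C i := eC
        have m4 : (ovr H M f {A i, B i, C i, U i j, U j i, B j} o1 o2 o3).m (U i j) = U j i := eU
        have m5 : (ovr H M f {A i, B i, C i, U i j, U j i, B j} o1 o2 o3).m (U j i) = U i j := eU'
        have m6 : (ovr H M f {A i, B i, C i, U i j, U j i, B j} o1 o2 o3).m (B j) = B j := eBj
        rw [m1, m2, m3, m4, m5, m6]
        rw [vt_eq_one H
            (by rw [hA]; exact bet_rank H (hadjAB H) (hadjAC H) (by simp [grank])),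
          vt_eq_one H
            (by rw [hB]; exact bet_rank H (hadjBA H) (hadjBU H hadj) (by simp [grank])),
          vt_eq_neg H (by rw [hC]; exact bet_un H (hadjCA H)),
          vt_eq_one H (by rw [hU]; exact bet_rank H (hadjUU H hadj) (hadjUB H hadj) (by simp [grank])),
          vt_eq_one H (by rw [hU']; exact bet_rank H (hadjUU H hadj.symm) (hadjUB H hadj.symm) (by simp [grank])),
          vt_eq_neg H (by rw [hBj]; exact bet_un H (hadjBU H hadj.symm))]
        norm_num
  · -- A–D
    have hD := minv H M hA
    rcases partnerB H M i with hB | hB | hB | ⟨j, hB, hadj⟩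
    · exact absurd hpop (beat3 H M (hadjAB H) (hadjDA H) hA hB (by simp)
        (bet_rank H (hadjAB H) (hadjAD H) (by simp [grank])))
    · exfalso; have := minv H M hB; rw [hA] at this; simp at this
    · exact Or.inr ⟨hA, hB⟩
    · exfalso
      have hC : M.m (C i) = C i := by
        rcases partnerC H M i with h | h | h
        · exact h
        · have := minv H M h; rw [hA] at this; simp at this
        · have := minv H M h; rw [hB] at this; simp at this
      exact beat3 H M (hadjAC H) (hadjDA H) hA hC (by simp)
        (bet_rank H (hadjAC H) (hadjAD H) (by simp [grank])) hpop

/-- in a popular matching, `u`-vertices of edges are matched to each other -/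
lemma S2 (M : (GofH H).Matching) (hpop : (GofH H).Popular M) {i j : Fin n}
    (hadj : H.Adj i j) : M.m (U i j) = U j i := by
  rcases partnerU H M hadj with hU | hU | hU
  · exfalso
    rcases partnerU H M hadj.symm with hU' | hU' | hU'
    · exact beat2 H M (hadjUU H hadj) hU hU' hpop
    · have := minv H M hU'; rw [hU] at this; simp at this; exact hadj.ne this.1
    · have hBj := minv H M hU'
      rcases S1 H M hpop j with h | ⟨-, h⟩
      · have := minv H M h; rw [hBj] at this; simp at this
      · rw [hBj] at h; simp at h
  · exact hU
  · exfalso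
    have hBi := minv H M hU
    rcases S1 H M hpop i with h | ⟨-, h⟩
    · have := minv H M h; rw [hBi] at this; simp at this
    · rw [hBi] at h; simp at h

/-- in a popular matching, the gadgets matched `a–b` form a vertex cover -/
lemma S3 (M : (GofH H).Matching) (hpop : (GofH H).Popular M) {i j : Fin n}
    (hadj : H.Adj i j) : M.m (A i) = B i ∨ M.m (A j) = B j := by
  by_contra hcon
  push_neg at hcon
  obtain ⟨h1, h2⟩ := hcon
  rcases S1 H M hpop i with h | ⟨hAi, hBi⟩
  · exact h1 h
  rcases S1 H M hpop j with h | ⟨hAj, hBj⟩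
  · exact h2 h
  have hCi := minv H M hBi
  have hDi := minv H M hAi
  have hCj := minv H M hBj
  have hDj := minv H M hAj
  have hUij := S2 H M hpop hadj
  have hUji := S2 H M hpop hadj.symm
  have hne := hadj.ne
  have hne' := hadj.ne'
  set f : GV n → GV n := fun u =>
    if u = A i then C i else if u = C i then A i else if u = B i then U i j else
    if u = U i j then B i else if u = D i then D i else
    if u = A j then C j else if u = C j then A j else if u = B j then U j i else
    if u = U j i then B j else if u = D j then D j else M.m u with hf
  have o1 : ∀ u, u ∉ ({A i, C i, B i, U i j, D i, A j, C j, B j, U j i, D j} :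
      Finset (GV n)) → f u = M.m u := by
    intro u hu
    simp only [Finset.mem_insert, Finset.mem_singleton, not_or] at hu
    obtain ⟨n1, n2, n3, n4, n5, n6, n7, n8, n9, n10⟩ := hu
    simp [hf, n1, n2, n3, n4, n5, n6, n7, n8, n9, n10]
  have o2 : ∀ u, u ∈ ({A i, C i, B i, U i j, D i, A j, C j, B j, U j i, D j} :
      Finset (GV n)) → M.m u ∈ ({A i, C i, B i, U i j, D i, A j, C j, B j, U j i, D j} :
      Finset (GV n)) := by
    intro u hu
    simp only [Finset.mem_insert, Finset.mem_singleton] at hu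
    rcases hu with rfl | rfl | rfl | rfl | rfl | rfl | rfl | rfl | rfl | rfl <;>
      simp [hAi, hBi, hCi, hDi, hAj, hBj, hCj, hDj, hUij, hUji]
  have eAi : f (A i) = C i := by simp [hf]
  have eCi : f (C i) = A i := by simp [hf]
  have eBi : f (B i) = U i j := by simp [hf]
  have eUij : f (U i j) = B i := by simp [hf]
  have eDi : f (D i) = D i := by simp [hf]
  have eAj : f (A j) = C j := by simp [hf, hne']
  have eCj : f (C j) = A j := by simp [hf, hne']
  have eBj : f (B j) = U j i := by simp [hf, hne']
  have eUji : f (U j i) = B j := by simp [hf, hne, hne']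
  have eDj : f (D j) = D j := by simp [hf, hne']
  have o3 : ∀ u, u ∈ ({A i, C i, B i, U i j, D i, A j, C j, B j, U j i, D j} :
      Finset (GV n)) → f (f u) = u ∧ (f u ≠ u → (GofH H).adj u (f u)) := by
    intro u hu
    simp only [Finset.mem_insert, Finset.mem_singleton] at hu
    rcases hu with rfl | rfl | rfl | rfl | rfl | rfl | rfl | rfl | rfl | rfl
    · exact ⟨by rw [eAi, eCi], fun _ => by rw [eAi]; exact hadjAC H⟩
    · exact ⟨by rw [eCi, eAi], fun _ => by rw [eCi]; exact hadjCA H⟩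
    · exact ⟨by rw [eBi, eUij], fun _ => by rw [eBi]; exact hadjBU H hadj⟩
    · exact ⟨by rw [eUij, eBi], fun _ => by rw [eUij]; exact hadjUB H hadj⟩
    · exact ⟨by rw [eDi, eDi], fun h => absurd eDi h⟩
    · exact ⟨by rw [eAj, eCj], fun _ => by rw [eAj]; exact hadjAC H⟩
    · exact ⟨by rw [eCj, eAj], fun _ => by rw [eCj]; exact hadjCA H⟩
    · exact ⟨by rw [eBj, eUji], fun _ => by rw [eBj]; exact hadjBU H hadj.symm⟩
    · exact ⟨by rw [eUji, eBj], fun _ => by rw [eUji]; exact hadjUB H hadj.symm⟩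
    · exact ⟨by rw [eDj, eDj], fun h => absurd eDj h⟩
  refine not_popular_of_beat H M
    (ovr H M f {A i, C i, B i, U i j, D i, A j, C j, B j, U j i, D j} o1 o2 o3)
    {A i, C i, B i, U i j, D i, A j, C j, B j, U j i, D j} o1 ?_ hpop
  rw [Finset.sum_insert (by simp [hne, hne']), Finset.sum_insert (by simp [hne, hne']),
    Finset.sum_insert (by simp [hne, hne']), Finset.sum_insert (by simp [hne, hne']),
    Finset.sum_insert (by simp [hne, hne']), Finset.sum_insert (by simp [hne, hne']),
    Finset.sum_insert (by simp [hne, hne']), Finset.sum_insert (by simp [hne, hne']),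
    Finset.sum_insert (by simp [hne, hne']), Finset.sum_singleton]
  have m1 : (ovr H M f _ o1 o2 o3).m (A i) = C i := eAi
  have m2 : (ovr H M f _ o1 o2 o3).m (C i) = A i := eCi
  have m3 : (ovr H M f _ o1 o2 o3).m (B i) = U i j := eBi
  have m4 : (ovr H M f _ o1 o2 o3).m (U i j) = B i := eUij
  have m5 : (ovr H M f _ o1 o2 o3).m (D i) = D i := eDi
  have m6 : (ovr H M f _ o1 o2 o3).m (A j) = C j := eAj
  have m7 : (ovr H M f _ o1 o2 o3).m (C j) = A j := eCj
  have m8 : (ovr H M f _ o1 o2 o3).m (B j) = U j i := eBj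
  have m9 : (ovr H M f _ o1 o2 o3).m (U j i) = B j := eUji
  have m10 : (ovr H M f _ o1 o2 o3).m (D j) = D j := eDj
  rw [m1, m2, m3, m4, m5, m6, m7, m8, m9, m10]
  rw [vt_eq_one H (by rw [hAi]; exact bet_rank H (hadjAC H) (hadjAD H) (by simp [grank])),
    vt_eq_one H (by rw [hCi]; exact bet_rank H (hadjCA H) (hadjCB H) (by simp [grank])),
    vt_eq_one H (by rw [hBi]; exact bet_rank H (hadjBU H hadj) (hadjBC H) (by simp [grank])),
    vt_eq_neg H (by rw [hUij]; exact bet_rank H (hadjUU H hadj) (hadjUB H hadj) (by simp [grank])),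
    vt_eq_neg H (by rw [hDi]; exact bet_un H (hadjDA H)),
    vt_eq_one H (by rw [hAj]; exact bet_rank H (hadjAC H) (hadjAD H) (by simp [grank])),
    vt_eq_one H (by rw [hCj]; exact bet_rank H (hadjCA H) (hadjCB H) (by simp [grank])),
    vt_eq_one H (by rw [hBj]; exact bet_rank H (hadjBU H hadj.symm) (hadjBC H) (by simp [grank])),
    vt_eq_neg H (by rw [hUji]; exact bet_rank H (hadjUU H hadj.symm) (hadjUB H hadj.symm) (by simp [grank])),
    vt_eq_neg H (by rw [hDj]; exact bet_un H (hadjDA H))]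
  norm_num

/-- size of a popular matching -/
lemma msize_eq (M : (GofH H).Matching) (hpop : (GofH H).Popular M) :
    (GofH H).msize M = H.edgeFinset.card + 2 * n -
      (Finset.univ.filter (fun i => M.m (A i) = B i)).card := by
  have hCself : ∀ i : Fin n, M.m (A i) = B i → M.m (C i) = C i := by
    intro i h
    rcases partnerC H M i with h' | h' | h'
    · exact h'
    · have := minv H M h'; rw [h] at this; simp at this
    · have := minv H M h'
      have h2 := minv H M h
      rw [h2] at this; simp at this
  have hDself : ∀ i : Fin n, M.m (A i) = B i → M.m (D i) = D i := by
    intro i h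
    rcases partnerD H M i with h' | h'
    · exact h'
    · have := minv H M h'; rw [h] at this; simp at this
  unfold RoommatesInstance.msize
  rw [Finset.filter_congr_decidable, Finset.card_filter, sum_gv]
  have hA : (∑ i : Fin n, (if M.m (A i) ≠ A i then 1 else 0)) = n := by
    rw [Finset.sum_congr rfl (fun i _ => ?_), Finset.sum_const, smul_eq_mul, mul_one,
      Finset.card_univ, Fintype.card_fin]
    rcases S1 H M hpop i with h | ⟨h, -⟩ <;> simp [h]
  have hB : (∑ i : Fin n, (if M.m (B i) ≠ B i then 1 else 0)) = n := by
    rw [Finset.sum_congr rfl (fun i _ => ?_), Finset.sum_const, smul_eq_mul, mul_one,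
      Finset.card_univ, Fintype.card_fin]
    rcases S1 H M hpop i with h | ⟨-, h⟩
    · simp [minv H M h]
    · simp [h]
  have hcompl : (Finset.univ.filter (fun i : Fin n => ¬ M.m (A i) = B i)).card =
      n - (Finset.univ.filter (fun i : Fin n => M.m (A i) = B i)).card := by
    rw [Finset.filter_not, Finset.card_sdiff_of_subset (Finset.filter_subset _ _),
      Finset.card_univ, Fintype.card_fin]
  have hCsum : (∑ i : Fin n, (if M.m (C i) ≠ C i then 1 else 0)) =
      n - (Finset.univ.filter (fun i : Fin n => M.m (A i) = B i)).card := by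
    rw [← hcompl, Finset.card_filter]
    refine Finset.sum_congr rfl (fun i _ => ?_)
    rcases S1 H M hpop i with h | ⟨h1, h2⟩
    · simp [hCself i h, h]
    · have : M.m (C i) = B i := minv H M h2
      simp [this, h1]
  have hDsum : (∑ i : Fin n, (if M.m (D i) ≠ D i then 1 else 0)) =
      n - (Finset.univ.filter (fun i : Fin n => M.m (A i) = B i)).card := by
    rw [← hcompl, Finset.card_filter]
    refine Finset.sum_congr rfl (fun i _ => ?_)
    rcases S1 H M hpop i with h | ⟨h1, h2⟩
    · simp [hDself i h, h]
    · have : M.m (D i) = A i := minv H M h1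
      simp [this, h1]
  have hUsum : (∑ p : Fin n × Fin n, (if M.m (U p.1 p.2) ≠ U p.1 p.2 then 1 else 0))
      = 2 * H.edgeFinset.card := by
    rw [← card_adj_pairs H, Finset.card_filter]
    refine Finset.sum_congr rfl (fun p _ => ?_)
    by_cases hp : H.Adj p.1 p.2
    · rw [S2 H M hpop hp, if_pos (by
        simp only [ne_eq, GV.U.injEq, not_and]; exact fun h' _ => hp.ne' h'), if_pos hp]
    · simp [partnerU' H M hp, hp]
  rw [hA, hB, hCsum, hDsum, hUsum]
  have : (Finset.univ.filter (fun i : Fin n => M.m (A i) = B i)).card ≤ n := by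
    simpa using Finset.card_filter_le Finset.univ (fun i : Fin n => M.m (A i) = B i)
  omega

end VCPop

open RoommatesInstance in
/-- For every `1 ≤ k ≤ n_H`, the graph `H` admits a vertex cover of
size `k` iff `G` admits a popular matching of size at least `m_H + 2 n_H - k`. -/
theorem vertexCover_iff_large_popular {n : ℕ} (H : SimpleGraph (Fin n))
    [DecidableRel H.Adj] (k : ℕ) (hk1 : 1 ≤ k) (hkn : k ≤ n) :
    (∃ C : Finset (Fin n), (∀ i j, H.Adj i j → i ∈ C ∨ j ∈ C) ∧ C.card = k) ↔
      ∃ M : (GofH H).Matching, (GofH H).Popular M ∧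
        H.edgeFinset.card + 2 * n - k ≤ (GofH H).msize M := by
  constructor
  · rintro ⟨K, hcov, hcard⟩
    refine ⟨MC H K, MC_popular H K hcov, ?_⟩
    rw [MC_msize H K (by rw [hcard]; exact hkn), hcard]
  · rintro ⟨M, hpop, hsize⟩
    have hms := msize_eq H M hpop
    have hle : (Finset.univ.filter (fun i : Fin n => M.m (GV.A i) = GV.B i)).card ≤ n := by
      simpa using Finset.card_filter_le Finset.univ (fun i : Fin n => M.m (GV.A i) = GV.B i)
    have hk0 : (Finset.univ.filter (fun i : Fin n => M.m (GV.A i) = GV.B i)).card ≤ k := by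
      rw [hms] at hsize; omega
    obtain ⟨K, hK0K, hKcard⟩ := Finset.exists_superset_card_eq hk0 (by simpa using hkn)
    refine ⟨K, fun i j hadj => ?_, hKcard⟩
    rcases S3 H M hpop hadj with h | h
    · exact Or.inl (hK0K (by simp [h]))
    · exact Or.inr (hK0K (by simp [h]))
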